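/- Let Q be a group acting on a commutative ring S by ring automorphisms such that for every q ≠ 1 in Q and every maximal ideal 𝔭 of S there exists s ∈ S with s − q • s ∉ 𝔭 (the Galois separation condition). Let A be a ring containing S as a subring such that, as a left S-module, A is free with a basis (v_q)_{q ∈ Q} satisfying v₁ = 1 and v_q s = (q • s) v_q for all q ∈ Q and s ∈ S. Then the centralizer of S in A equals S; that is, an element x = Σ_q a_q v_q of A commutes with every element of S if and only if a_q = 0 for all q ≠ 1. -/

import Mathlib

/-- Let a group `Q` act on a commutative ring `S` by ring automorphisms satisfying the
Galois separation condition, and let `A` be a ring containing `S` (via an injective ring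
homomorphism `ι`) that is free as a left `S`-module with a basis `(v_q)_{q ∈ Q}` such that
`v_1 = 1` and `v_q · s = (q • s) · v_q`.  Then the centralizer of `S` in `A` equals `S`:
an element `x = Σ_q a_q v_q` commutes with every element of `S` if and only if `a_q = 0`
for all `q ≠ 1`. -/
theorem centralizer_eq_base_of_crossed_basis (S Q A : Type*) [CommRing S] [Group Q]
    [MulSemiringAction Q S] [Ring A]
    (hsep : ∀ q : Q, q ≠ 1 → ∀ 𝔭 : Ideal S, 𝔭.IsMaximal → ∃ s : S, s - q • s ∉ 𝔭)
    (ι : S →+* A) (hι : Function.Injective ι)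
    [Module S A] (hsmul : ∀ (s : S) (a : A), s • a = ι s * a)
    (v : Module.Basis Q S A) (hv1 : v 1 = 1)
    (hv : ∀ (q : Q) (s : S), v q * ι s = ι (q • s) * v q) :
    ∀ x : A, (∀ s : S, x * ι s = ι s * x) ↔ (∀ q : Q, q ≠ 1 → v.repr x q = 0) := by
  intro x
  -- coefficient of `x * ι s` at `q` is `repr x q * (q • s)`
  have hxs : ∀ (s : S) (q : Q), v.repr (x * ι s) q = v.repr x q * (q • s) := by
    classical
    intro s q
    conv_lhs => rw [← v.linearCombination_repr x]
    rw [Finsupp.linearCombination_apply, Finsupp.sum_mul]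
    have hterm : ∀ (q' : Q) (c : S), (c • v q') * ι s = (c * q' • s) • v q' := by
      intro q' c
      rw [hsmul, mul_assoc, hv, ← mul_assoc, ← map_mul, ← hsmul]
    have : (v.repr x).sum (fun q' c => (c • v q') * ι s)
        = (v.repr x).sum (fun q' c => (c * q' • s) • v q') := by
      exact Finsupp.sum_congr fun q' _ => hterm q' _
    rw [this, map_finsuppSum, Finsupp.sum_apply]
    have : ∀ (q' : Q) (c : S), (v.repr ((c * q' • s) • v q')) q
        = if q' = q then c * q' • s else 0 := by
      intro q' c
      rw [map_smul, v.repr_self]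
      by_cases h : q' = q <;> simp [Finsupp.single_apply, h]
    have h2 : ((v.repr x).sum fun q' c => (v.repr ((c * q' • s) • v q')) q)
        = (v.repr x).sum fun q' c => if q' = q then c * q' • s else 0 :=
      Finsupp.sum_congr fun q' _ => this q' _
    rw [h2, Finsupp.sum_ite_eq' (v.repr x) q (fun q' c => c * q' • s)]
    by_cases hq : q ∈ (v.repr x).support
    · simp [hq]
    · simp only [hq, if_neg]
      simp [Finsupp.notMem_support_iff.mp hq]
  have hsx : ∀ (s : S) (q : Q), v.repr (ι s * x) q = s * v.repr x q := by
    intro s q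
    rw [← hsmul, map_smul]
    rfl
  constructor
  · intro h q hq
    by_contra ha
    set a := v.repr x q with ha_def
    let I : Ideal S :=
      { carrier := {r | a * r = 0}
        add_mem' := fun {r} {t} hr ht => by
          simp only [Set.mem_setOf_eq] at *
          rw [mul_add, hr, ht, add_zero]
        zero_mem' := by simp
        smul_mem' := fun c r hr => by
          simp only [Set.mem_setOf_eq, smul_eq_mul] at *
          rw [mul_comm c r, ← mul_assoc, hr, zero_mul] }
    have hne : I ≠ ⊤ := by
      intro htop
      apply ha
      have h1 : (1 : S) ∈ I := htop ▸ Submodule.mem_top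
      have h2 : a * 1 = 0 := h1
      rwa [mul_one] at h2
    obtain ⟨𝔭, hm, hle⟩ := Ideal.exists_le_maximal I hne
    obtain ⟨s, hs⟩ := hsep q hq 𝔭 hm
    apply hs
    apply hle
    show a * (s - q • s) = 0
    have hrel : a * (q • s) = s * a := by
      have := congrArg (fun y => v.repr y q) (h s)
      simpa [hxs, hsx] using this
    rw [mul_sub, hrel, mul_comm, sub_self]
  · intro h s
    have hx : x = ι (v.repr x 1) := by
      conv_lhs => rw [← v.linearCombination_repr x]
      rw [Finsupp.linearCombination_apply,
        Finsupp.sum_eq_single (1 : Q) (fun q _ hq1 => by rw [h q hq1, zero_smul])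
          (fun _ => zero_smul S _)]
      rw [hv1, hsmul, mul_one]
    rw [hx, ← map_mul, ← map_mul, mul_comm]
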